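/- Let X be a complex Banach space and A₁, A₂, A₃ positive operators on X with the same domain D ⊆ X. Suppose C ∈ L(X) is the inverse of A₁ − A₃ (i.e., for every y ∈ X, Cy ∈ D and A₁(Cy) − A₃(Cy) = y, and C(A₁x − A₃x) = x for all x ∈ D) and that C commutes with (s+A₃)^{-1} for every s ≥ 0. Define Λ₃ on X × X × X with domain D × D × D by Λ₃(u,v,w) = (A₁u, A₂v, u + A₃w). Then: (1) for every s ≥ 0, s + Λ₃ : D × D × D → X × X × X is bijective with bounded inverse given by (x,y,z) ↦ ((s+A₁)^{-1}x, (s+A₂)^{-1}y, −(s+A₁)^{-1}(s+A₃)^{-1}x + (s+A₃)^{-1}z), and Λ₃ is a positive operator on X × X × X; (2) for every α ∈ (0,1), the Balakrishnan integral Λ₃^{-α} = (sin(πα)/π) ∫₀^∞ s^{-α}(s+Λ₃)^{-1} ds satisfies Λ₃^{-α}(x,y,z) = ( A₁^{-α}x, A₂^{-α}y, C(A₁^{-α}x − A₃^{-α}x) + A₃^{-α}z ) for all (x,y,z) ∈ X × X × X, where Aᵢ^{-α} = (sin(πα)/π) ∫₀^∞ s^{-α}(s+Aᵢ)^{-1}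 ds. -/

import Mathlib

open MeasureTheory Real Set

noncomputable section

/-- `R` is a two-sided bounded inverse of `lam + A : D(A) → X`;
in particular `lam + A` is bijective from `D(A)` onto `X` with bounded inverse `R`. -/
def ResolventAt {X : Type*} [NormedAddCommGroup X] [NormedSpace ℂ X]
    (A : X →ₗ.[ℂ] X) (lam : ℂ) (R : X →L[ℂ] X) : Prop :=
  (∀ x : A.domain, R (lam • (x : X) + A x) = x) ∧
  (∀ y : X, ∃ h : R y ∈ A.domain, lam • R y + A ⟨R y, h⟩ = y)

namespace ResolventAt

variable {X : Type*} [NormedAddCommGroup X] [NormedSpace ℂ X]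
  {A : X →ₗ.[ℂ] X} {lam : ℂ} {R : X →L[ℂ] X}

theorem mem (h : ResolventAt A lam R) (y : X) : R y ∈ A.domain := (h.2 y).choose

theorem eq (h : ResolventAt A lam R) (y : X) :
    lam • R y + A ⟨R y, h.mem y⟩ = y := (h.2 y).choose_spec

theorem eq' (h : ResolventAt A lam R) (y : X) (hm : R y ∈ A.domain) :
    A ⟨R y, hm⟩ = y - lam • R y := by
  have h2 := h.eq y
  have : A ⟨R y, hm⟩ = A ⟨R y, h.mem y⟩ := rfl
  rw [this, eq_sub_iff_add_eq, add_comm]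
  exact h2

theorem left (h : ResolventAt A lam R) (x : A.domain) :
    R (lam • (x : X) + A x) = x := h.1 x

theorem left' (h : ResolventAt A lam R) (x : X) (hm : x ∈ A.domain) :
    R (lam • x + A ⟨x, hm⟩) = x := h.1 ⟨x, hm⟩

end ResolventAt


/-- `A` is a positive operator with constant `M ≥ 1` and resolvent family `R`. -/
structure IsPositive {X : Type*} [NormedAddCommGroup X] [NormedSpace ℂ X]
    (A : X →ₗ.[ℂ] X) (M : ℝ) (R : ℝ → X →L[ℂ] X) : Prop where
  dense_domain : Dense (A.domain : Set X)
  closed_graph : IsClosed (A.graph : Set (X × X))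
  one_le : 1 ≤ M
  resolvent : ∀ s : ℝ, 0 ≤ s → ResolventAt A (s : ℂ) (R s)
  bound : ∀ s : ℝ, 0 ≤ s → (1 + s) * ‖R s‖ ≤ M

namespace IsPositive

variable {X : Type*} [NormedAddCommGroup X] [NormedSpace ℂ X]
  {A : X →ₗ.[ℂ] X} {M : ℝ} {R : ℝ → X →L[ℂ] X}

theorem norm_le (h : IsPositive A M R) {s : ℝ} (hs : 0 ≤ s) : ‖R s‖ ≤ M / (1 + s) := by
  have h1 : (0:ℝ) < 1 + s := by linarith
  rw [le_div_iff₀ h1]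
  have := h.bound s hs; linarith [this]

theorem norm_le' (h : IsPositive A M R) {s : ℝ} (hs : 0 ≤ s) : ‖R s‖ ≤ M :=
  (h.norm_le hs).trans (by
    rw [div_le_iff₀ (by linarith : (0:ℝ) < 1 + s)]
    nlinarith [h.one_le])

theorem M_pos (h : IsPositive A M R) : 0 < M := lt_of_lt_of_le one_pos h.one_le

/-- The resolvent family is Lipschitz on `[0, ∞)`, hence continuous. -/
theorem continuousOn (h : IsPositive A M R) : ContinuousOn R (Ici (0:ℝ)) := by
  have key : ∀ s ∈ Ici (0:ℝ), ∀ t ∈ Ici (0:ℝ), ∀ y : X,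
      R t y - R s y = ((s : ℂ) - t) • R s (R t y) := by
    intro s hs t ht y
    have hmem := (h.resolvent t ht).mem y
    have h1 : R s ((s:ℂ) • (R t y) + A ⟨R t y, hmem⟩) = R t y :=
      (h.resolvent s hs).left' (R t y) hmem
    have h2 : A ⟨R t y, hmem⟩ = y - (t:ℂ) • R t y := (h.resolvent t ht).eq' y hmem
    rw [h2] at h1
    have h3 : (s:ℂ) • (R t y) + (y - (t:ℂ) • R t y) = ((s:ℂ) - (t:ℂ)) • R t y + y := by
      rw [sub_smul]; abel
    rw [h3] at h1
    have h4 : R s (((s:ℂ)-(t:ℂ)) • R t y + y)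
        = ((s:ℂ)-(t:ℂ)) • R s (R t y) + R s y := by
      rw [map_add, (R s).map_smul]
    calc R t y - R s y = R s (((s:ℂ)-(t:ℂ)) • R t y + y) - R s y := by rw [h1]
      _ = ((s:ℂ)-(t:ℂ)) • R s (R t y) + R s y - R s y := by rw [h4]
      _ = ((s:ℂ)-(t:ℂ)) • R s (R t y) := by abel
  have hMM : (0:ℝ) ≤ M * M := mul_self_nonneg M
  have lip : LipschitzOnWith (M * M).toNNReal R (Ici (0:ℝ)) := by
    apply LipschitzOnWith.of_dist_le_mul
    intro s hs t ht
    rw [dist_eq_norm, Real.dist_eq, Real.coe_toNNReal _ hMM]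
    apply ContinuousLinearMap.opNorm_le_bound _ (by positivity)
    intro y
    have hkey := key t ht s hs y
    have h5 : ‖R s y - R t y‖ = ‖(t:ℂ) - s‖ * ‖R t (R s y)‖ := by
      rw [hkey, norm_smul]
    have h6 : ‖(t:ℂ) - (s:ℂ)‖ = |s - t| := by
      rw [← Complex.ofReal_sub, Complex.norm_real, Real.norm_eq_abs, abs_sub_comm]
    have h7 : ‖R t (R s y)‖ ≤ M * (M * ‖y‖) := by
      calc ‖R t (R s y)‖ ≤ ‖R t‖ * ‖R s y‖ := (R t).le_opNorm _
        _ ≤ M * (M * ‖y‖) := by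
            apply mul_le_mul (h.norm_le' ht) ?_ (norm_nonneg _) (le_of_lt h.M_pos)
            calc ‖R s y‖ ≤ ‖R s‖ * ‖y‖ := (R s).le_opNorm _
              _ ≤ M * ‖y‖ := mul_le_mul_of_nonneg_right (h.norm_le' hs) (norm_nonneg _)
    calc ‖(R s - R t) y‖ = ‖R s y - R t y‖ := rfl
      _ = ‖(t:ℂ) - (s:ℂ)‖ * ‖R t (R s y)‖ := h5
      _ ≤ |s - t| * (M * (M * ‖y‖)) := by rw [h6]; exact mul_le_mul_of_nonneg_left h7 (abs_nonneg _)
      _ = M * M * |s - t| * ‖y‖ := by ring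
  exact lip.continuousOn

end IsPositive

/-- Generic integrability of `s ↦ s^(-α) • F s` on `(0,∞)` when `‖F s‖ ≤ K/(1+s)`. -/
theorem integrable_aux {E : Type*} [NormedAddCommGroup E] [NormedSpace ℝ E]
    {F : ℝ → E} (hF : ContinuousOn F (Ici (0:ℝ))) {K : ℝ} (hK : 0 ≤ K)
    (hb : ∀ s : ℝ, 0 ≤ s → ‖F s‖ ≤ K / (1 + s)) {α : ℝ} (hα : α ∈ Ioo (0:ℝ) 1) :
    IntegrableOn (fun s : ℝ => s ^ (-α) • F s) (Ioi (0:ℝ)) := by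
  obtain ⟨hα0, hα1⟩ := hα
  have hcont : ContinuousOn (fun s : ℝ => s ^ (-α) • F s) (Ioi (0:ℝ)) := by
    apply ContinuousOn.smul
    · exact ContinuousOn.rpow_const continuousOn_id
        (fun x hx => Or.inl (ne_of_gt (mem_Ioi.mp hx)))
    · exact hF.mono Ioi_subset_Ici_self
  have hmeas : ∀ t : Set ℝ, t ⊆ Ioi (0:ℝ) → MeasurableSet t →
      AEStronglyMeasurable (fun s : ℝ => s ^ (-α) • F s) (volume.restrict t) :=
    fun t ht hmt => (hcont.mono ht).aestronglyMeasurable hmt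
  have hFle : ∀ s : ℝ, 0 < s → ‖s ^ (-α) • F s‖ ≤ K * (s ^ (-α) / (1 + s)) := by
    intro s hs
    rw [norm_smul, Real.norm_eq_abs, abs_of_nonneg (Real.rpow_nonneg hs.le _)]
    calc s ^ (-α) * ‖F s‖ ≤ s ^ (-α) * (K / (1 + s)) := by
          exact mul_le_mul_of_nonneg_left (hb s hs.le) (Real.rpow_nonneg hs.le _)
      _ = K * (s ^ (-α) / (1 + s)) := by ring
  have h01 : IntegrableOn (fun s : ℝ => s ^ (-α) • F s) (Ioc (0:ℝ) 1) := by
    have hg : IntegrableOn (fun s : ℝ => K * s ^ (-α)) (Ioc (0:ℝ) 1) := by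
      apply Integrable.const_mul
      exact (intervalIntegrable_iff_integrableOn_Ioc_of_le zero_le_one).mp
        (intervalIntegral.intervalIntegrable_rpow' (by linarith))
    apply Integrable.mono' hg (hmeas _ Ioc_subset_Ioi_self measurableSet_Ioc)
    · filter_upwards [ae_restrict_mem measurableSet_Ioc] with s hs
      have hs0 : 0 < s := hs.1
      calc ‖s ^ (-α) • F s‖ ≤ K * (s ^ (-α) / (1 + s)) := hFle s hs0
        _ ≤ K * s ^ (-α) := by
            apply mul_le_mul_of_nonneg_left _ hK
            rw [div_le_iff₀ (by linarith)]
            nlinarith [Real.rpow_nonneg hs0.le (-α)]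
  have h1inf : IntegrableOn (fun s : ℝ => s ^ (-α) • F s) (Ioi (1:ℝ)) := by
    have hg : IntegrableOn (fun s : ℝ => K * s ^ (-α - 1)) (Ioi (1:ℝ)) := by
      apply Integrable.const_mul
      exact integrableOn_Ioi_rpow_of_lt (by linarith) one_pos
    apply Integrable.mono' hg (hmeas _ (fun s hs => mem_Ioi.mpr (lt_trans one_pos hs)) measurableSet_Ioi)
    · filter_upwards [ae_restrict_mem measurableSet_Ioi] with s hs
      have hs1 : 1 < s := hs
      have hs0 : 0 < s := lt_trans one_pos hs1
      calc ‖s ^ (-α) • F s‖ ≤ K * (s ^ (-α) / (1 + s)) := hFle s hs0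
        _ ≤ K * s ^ (-α - 1) := by
            apply mul_le_mul_of_nonneg_left _ hK
            rw [Real.rpow_sub hs0, Real.rpow_one, div_le_div_iff₀ (by linarith) hs0]
            nlinarith [Real.rpow_nonneg hs0.le (-α)]
  rw [← Ioc_union_Ioi_eq_Ioi (zero_le_one : (0:ℝ) ≤ 1)]
  exact h01.union h1inf

/-- The Balakrishnan fractional power `A ^ (-α)`, expressed through the
resolvent family `R` of `A`:  `A⁻ᵅ = (sin (π α) / π) ∫₀^∞ s⁻ᵅ (s+A)⁻¹ ds`. -/
def negPow {X : Type*} [NormedAddCommGroup X] [NormedSpace ℂ X]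
    (R : ℝ → X →L[ℂ] X) (α : ℝ) : X →L[ℂ] X :=
  (Real.sin (π * α) / π) • ∫ s in Ioi (0 : ℝ), s ^ (-α) • R s

/-- The bounded operator on `X × X × X` given by
`(x, y, z) ↦ ((s+A₁)⁻¹ x, (s+A₂)⁻¹ y, -(s+A₁)⁻¹(s+A₃)⁻¹ x + (s+A₃)⁻¹ z)`,
i.e. the claimed inverse of `s + Λ₃`. -/
def invL3 {X : Type*} [NormedAddCommGroup X] [NormedSpace ℂ X]
    (R1 R2 R3 : ℝ → X →L[ℂ] X) (s : ℝ) : (X × X × X) →L[ℂ] (X × X × X) :=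
  ((R1 s).comp (ContinuousLinearMap.fst ℂ X (X × X))).prod
    (((R2 s).comp ((ContinuousLinearMap.fst ℂ X X).comp
        (ContinuousLinearMap.snd ℂ X (X × X)))).prod
      (-((R1 s).comp ((R3 s).comp (ContinuousLinearMap.fst ℂ X (X × X)))) +
        (R3 s).comp ((ContinuousLinearMap.snd ℂ X X).comp
          (ContinuousLinearMap.snd ℂ X (X × X)))))

/-- Continuity of `s ↦ (f s).prod (g s)` for continuous families of operators. -/
theorem contOn_clm_prod {E F G : Type*} [NormedAddCommGroup E] [NormedSpace ℂ E]
    [NormedAddCommGroup F] [NormedSpace ℂ F] [NormedAddCommGroup G] [NormedSpace ℂ G]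
    {f : ℝ → E →L[ℂ] F} {g : ℝ → E →L[ℂ] G} {s : Set ℝ}
    (hf : ContinuousOn f s) (hg : ContinuousOn g s) :
    ContinuousOn (fun t => (f t).prod (g t)) s :=
  (ContinuousLinearMap.prodₗᵢ (𝕜 := ℂ) (E := E) (F := F) (G := G)
    ℝ).continuous.comp_continuousOn (hf.prodMk hg)

/-- for positive operators `A₁, A₂, A₃` with common domain `D`, with
`C = (A₁ - A₃)⁻¹` commuting with the resolvent of `A₃`, the operator
`Λ₃(u,v,w) = (A₁u, A₂v, u + A₃w)` on `D × D × D` satisfies: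
(1) for `s ≥ 0`, `s + Λ₃` is bijective with bounded inverse `invL3 R1 R2 R3 s`,
and `Λ₃` is a positive operator on `X × X × X` (dense domain, closed graph,
uniform resolvent bound); (2) for `α ∈ (0,1)`,
`Λ₃⁻ᵅ (x,y,z) = (A₁⁻ᵅ x, A₂⁻ᵅ y, C (A₁⁻ᵅ x - A₃⁻ᵅ x) + A₃⁻ᵅ z)`. -/
theorem stmt19 {X : Type*} [NormedAddCommGroup X] [NormedSpace ℂ X] [CompleteSpace X]
    (M₁ M₂ M₃ : ℝ) (A₁ A₂ A₃ : X →ₗ.[ℂ] X) (R1 R2 R3 : ℝ → X →L[ℂ] X)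
    (hA₁ : IsPositive A₁ M₁ R1) (hA₂ : IsPositive A₂ M₂ R2) (hA₃ : IsPositive A₃ M₃ R3)
    (hdom12 : A₁.domain = A₂.domain) (hdom13 : A₁.domain = A₃.domain)
    (C : X →L[ℂ] X)
    -- `C` maps into `D` and `(A₁ - A₃) ∘ C = I`
    (ha : ∀ y : X, ∃ (h1 : C y ∈ A₁.domain) (h3 : C y ∈ A₃.domain),
      A₁ ⟨C y, h1⟩ - A₃ ⟨C y, h3⟩ = y)
    -- `C ∘ (A₁ - A₃) = I` on `D`
    (hb : ∀ (x : X) (h1 : x ∈ A₁.domain) (h3 : x ∈ A₃.domain),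
      C (A₁ ⟨x, h1⟩ - A₃ ⟨x, h3⟩) = x)
    -- `C` commutes with the resolvent of `A₃`
    (hc : ∀ s : ℝ, 0 ≤ s → C.comp (R3 s) = (R3 s).comp C) :
    -- (1) `s + Λ₃` is bijective with bounded inverse `invL3 R1 R2 R3 s` ...
    (∀ s : ℝ, 0 ≤ s →
      (∀ (u v w : X) (hu : u ∈ A₁.domain) (hv : v ∈ A₂.domain) (hw : w ∈ A₃.domain),
        invL3 R1 R2 R3 s ((s : ℂ) • u + A₁ ⟨u, hu⟩, (s : ℂ) • v + A₂ ⟨v, hv⟩,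
            u + ((s : ℂ) • w + A₃ ⟨w, hw⟩)) = (u, v, w)) ∧
      (∀ p : X × X × X,
        ∃ (h1 : (R1 s) p.1 ∈ A₁.domain) (h2 : (R2 s) p.2.1 ∈ A₂.domain)
          (h3 : -(R1 s) ((R3 s) p.1) + (R3 s) p.2.2 ∈ A₃.domain),
          (s : ℂ) • (R1 s) p.1 + A₁ ⟨(R1 s) p.1, h1⟩ = p.1 ∧
          (s : ℂ) • (R2 s) p.2.1 + A₂ ⟨(R2 s) p.2.1, h2⟩ = p.2.1 ∧
          (R1 s) p.1 + ((s : ℂ) • (-(R1 s) ((R3 s) p.1) + (R3 s) p.2.2) +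
            A₃ ⟨-(R1 s) ((R3 s) p.1) + (R3 s) p.2.2, h3⟩) = p.2.2)) ∧
    -- ... and `Λ₃` is a positive operator on `X × X × X`:
    Dense {p : X × X × X | p.1 ∈ A₁.domain ∧ p.2.1 ∈ A₂.domain ∧ p.2.2 ∈ A₃.domain} ∧
    IsClosed {q : (X × X × X) × (X × X × X) |
      ∃ (hu : q.1.1 ∈ A₁.domain) (hv : q.1.2.1 ∈ A₂.domain) (hw : q.1.2.2 ∈ A₃.domain),
        q.2 = (A₁ ⟨q.1.1, hu⟩, A₂ ⟨q.1.2.1, hv⟩, q.1.1 + A₃ ⟨q.1.2.2, hw⟩)} ∧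
    (∃ M' : ℝ, 1 ≤ M' ∧ ∀ s : ℝ, 0 ≤ s → (1 + s) * ‖invL3 R1 R2 R3 s‖ ≤ M') ∧
    -- (2) the fractional powers of `Λ₃`:
    (∀ α : ℝ, α ∈ Ioo (0 : ℝ) 1 →
      IntegrableOn (fun s : ℝ => s ^ (-α) • invL3 R1 R2 R3 s) (Ioi 0) ∧
      ∀ p : X × X × X,
        ((Real.sin (π * α) / π) • ∫ s in Ioi (0 : ℝ), s ^ (-α) • invL3 R1 R2 R3 s) p
          = (negPow R1 α p.1, negPow R2 α p.2.1,
              C (negPow R1 α p.1 - negPow R3 α p.1) + negPow R3 α p.2.2)) := by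
  -- basic facts about C
  have hCd1 : ∀ y : X, C y ∈ A₁.domain := fun y => (ha y).choose
  have hCd3 : ∀ y : X, C y ∈ A₃.domain := fun y => (ha y).choose_spec.choose
  have hCeq : ∀ y : X, A₁ ⟨C y, hCd1 y⟩ - A₃ ⟨C y, hCd3 y⟩ = y :=
    fun y => (ha y).choose_spec.choose_spec
  have hCR3 : ∀ s : ℝ, 0 ≤ s → ∀ y : X, C (R3 s y) = R3 s (C y) :=
    fun s hs y => ContinuousLinearMap.ext_iff.mp (hc s hs) y
  -- C commutes with A₃
  have hA3C : ∀ (x : X) (h3 : x ∈ A₃.domain), C (A₃ ⟨x, h3⟩) = A₃ ⟨C x, hCd3 _⟩ := by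
    intro x h3
    have r := hA₃.resolvent 0 le_rfl
    have e1 : R3 0 (A₃ ⟨x, h3⟩) = x := by
      have := r.left' x h3; simpa using this
    have e2 : C x = R3 0 (C (A₃ ⟨x, h3⟩)) := by
      calc C x = C (R3 0 (A₃ ⟨x, h3⟩)) := by rw [e1]
        _ = R3 0 (C (A₃ ⟨x, h3⟩)) := hCR3 0 le_rfl _
    have e3 : A₃ ⟨R3 0 (C (A₃ ⟨x, h3⟩)), r.mem _⟩
        = C (A₃ ⟨x, h3⟩) - ((0:ℝ):ℂ) • R3 0 (C (A₃ ⟨x, h3⟩)) := r.eq' _ _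
    have e4 : A₃ ⟨C x, hCd3 _⟩ = A₃ ⟨R3 0 (C (A₃ ⟨x, h3⟩)), r.mem _⟩ :=
      congrArg _ (Subtype.ext e2)
    rw [e4, e3]; simp
  -- C commutes with the resolvent of A₁
  have hCR1 : ∀ s : ℝ, 0 ≤ s → ∀ y : X, C (R1 s y) = R1 s (C y) := by
    intro s hs y
    have r1 := hA₁.resolvent s hs
    set u := R1 s y with hu_def
    have hu1 : u ∈ A₁.domain := r1.mem y
    have hu3 : u ∈ A₃.domain := hdom13 ▸ hu1
    have k1 : R1 s ((s:ℂ) • (C u) + A₁ ⟨C u, hCd1 u⟩) = C u := r1.left' _ _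
    have k2 : A₁ ⟨C u, hCd1 u⟩ = u + A₃ ⟨C u, hCd3 u⟩ := by
      have := hCeq u; rw [sub_eq_iff_eq_add] at this; exact this
    have k5 : C (A₁ ⟨u, hu1⟩) = u + C (A₃ ⟨u, hu3⟩) := by
      have hbu := hb u hu1 hu3
      rw [map_sub] at hbu
      rw [sub_eq_iff_eq_add] at hbu; exact hbu
    have k4 : C y = (s:ℂ) • (C u) + C (A₁ ⟨u, hu1⟩) := by
      have := r1.eq y
      calc C y = C ((s:ℂ) • R1 s y + A₁ ⟨R1 s y, r1.mem y⟩) := by rw [this]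
        _ = (s:ℂ) • (C u) + C (A₁ ⟨u, hu1⟩) := by rw [map_add, C.map_smul]
    have k6 : (s:ℂ) • (C u) + A₁ ⟨C u, hCd1 u⟩ = C y := by
      rw [k2, k4, k5, ← hA3C u hu3]
    rw [← k6, k1]
  -- the two key resolvent identities
  have hR31 : ∀ s : ℝ, 0 ≤ s → ∀ x : X,
      R3 s (R1 s x) = C (R3 s x) - C (R1 s x) := by
    intro s hs x
    have r1 := hA₁.resolvent s hs
    have r3 := hA₃.resolvent s hs
    set u := R1 s x with hu_def
    have hu1 : u ∈ A₁.domain := r1.mem x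
    have hu3 : u ∈ A₃.domain := hdom13 ▸ hu1
    have e0 : (s:ℂ) • u + A₁ ⟨u, hu1⟩ = x := r1.eq x
    have e1 : x = ((s:ℂ) • u + A₃ ⟨u, hu3⟩) + (A₁ ⟨u, hu1⟩ - A₃ ⟨u, hu3⟩) := by
      rw [← e0]; abel
    have e2 : R3 s ((s:ℂ) • u + A₃ ⟨u, hu3⟩) = u := r3.left' _ _
    have e3 : R3 s x = u + R3 s (A₁ ⟨u, hu1⟩ - A₃ ⟨u, hu3⟩) := by
      rw [e1, map_add, e2]
    have e4 : C (R3 s x) = C u + R3 s u := by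
      rw [e3, map_add, hCR3 s hs, hb u hu1 hu3]
    rw [e4]; abel
  have hR13 : ∀ s : ℝ, 0 ≤ s → ∀ x : X,
      R1 s (R3 s x) = C (R3 s x) - C (R1 s x) := by
    intro s hs x
    have r1 := hA₁.resolvent s hs
    have r3 := hA₃.resolvent s hs
    set v := R3 s x with hv_def
    have hv3 : v ∈ A₃.domain := r3.mem x
    have hv1 : v ∈ A₁.domain := hdom13.symm ▸ hv3
    have e0 : (s:ℂ) • v + A₃ ⟨v, hv3⟩ = x := r3.eq x
    have e1 : x = ((s:ℂ) • v + A₁ ⟨v, hv1⟩) - (A₁ ⟨v, hv1⟩ - A₃ ⟨v, hv3⟩) := by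
      rw [← e0]; abel
    have e2 : R1 s ((s:ℂ) • v + A₁ ⟨v, hv1⟩) = v := r1.left' _ _
    have e3 : R1 s x = v - R1 s (A₁ ⟨v, hv1⟩ - A₃ ⟨v, hv3⟩) := by
      rw [e1, map_sub, e2]
    have e4 : C (R1 s x) = C v - R1 s v := by
      rw [e3, map_sub, hCR1 s hs, hb v hv1 hv3]
    rw [e4]; abel
  have hswap : ∀ s : ℝ, 0 ≤ s → ∀ x : X, R1 s (R3 s x) = R3 s (R1 s x) := by
    intro s hs x; rw [hR13 s hs, hR31 s hs]
  have hinv : ∀ (s : ℝ) (p : X × X × X), invL3 R1 R2 R3 s p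
      = (R1 s p.1, (R2 s p.2.1, -(R1 s (R3 s p.1)) + R3 s p.2.2)) := fun s p => rfl
  -- the uniform bound
  set M' := max M₁ (max M₂ (M₁ * M₃ + M₃)) with hM'_def
  have hM'1 : 1 ≤ M' := le_trans hA₁.one_le (le_max_left _ _)
  have hM'0 : 0 ≤ M' := by linarith
  have hM'₂ : M₂ ≤ M' := le_trans (le_max_left _ _) (le_max_right _ _)
  have hM'₃ : M₁ * M₃ + M₃ ≤ M' := le_trans (le_max_right _ _) (le_max_right _ _)
  have hinvb : ∀ s : ℝ, 0 ≤ s → ‖invL3 R1 R2 R3 s‖ ≤ M' / (1 + s) := by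
    intro s hs
    have h1s : (0:ℝ) < 1 + s := by linarith
    apply ContinuousLinearMap.opNorm_le_bound _ (div_nonneg hM'0 h1s.le)
    intro p
    have hp1 : ‖p.1‖ ≤ ‖p‖ := norm_fst_le p
    have hp21 : ‖p.2.1‖ ≤ ‖p‖ := le_trans (norm_fst_le p.2) (norm_snd_le p)
    have hp22 : ‖p.2.2‖ ≤ ‖p‖ := le_trans (norm_snd_le p.2) (norm_snd_le p)
    have b1 : ‖R1 s p.1‖ ≤ M' / (1 + s) * ‖p‖ := by
      calc ‖R1 s p.1‖ ≤ ‖R1 s‖ * ‖p.1‖ := (R1 s).le_opNorm _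
        _ ≤ M₁ / (1 + s) * ‖p‖ := by
            apply mul_le_mul (hA₁.norm_le hs) hp1 (norm_nonneg _)
              (div_nonneg hA₁.M_pos.le (by linarith))
        _ ≤ M' / (1 + s) * ‖p‖ := by gcongr; exact le_max_left _ _
    have b2 : ‖R2 s p.2.1‖ ≤ M' / (1 + s) * ‖p‖ := by
      calc ‖R2 s p.2.1‖ ≤ ‖R2 s‖ * ‖p.2.1‖ := (R2 s).le_opNorm _
        _ ≤ M₂ / (1 + s) * ‖p‖ := by
            apply mul_le_mul (hA₂.norm_le hs) hp21 (norm_nonneg _)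
              (div_nonneg hA₂.M_pos.le (by linarith))
        _ ≤ M' / (1 + s) * ‖p‖ := by gcongr
    have t2 : ‖R3 s p.2.2‖ ≤ M₃ / (1 + s) * ‖p‖ := by
      calc ‖R3 s p.2.2‖ ≤ ‖R3 s‖ * ‖p.2.2‖ := (R3 s).le_opNorm _
        _ ≤ M₃ / (1 + s) * ‖p‖ := by
            apply mul_le_mul (hA₃.norm_le hs) hp22 (norm_nonneg _)
              (div_nonneg hA₃.M_pos.le (by linarith))
    have t1 : ‖R1 s (R3 s p.1)‖ ≤ M₁ * M₃ / (1 + s) * ‖p‖ := by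
      calc ‖R1 s (R3 s p.1)‖ ≤ ‖R1 s‖ * ‖R3 s p.1‖ := (R1 s).le_opNorm _
        _ ≤ M₁ * (M₃ / (1 + s) * ‖p‖) := by
            apply mul_le_mul (hA₁.norm_le' hs) _ (norm_nonneg _) (le_of_lt hA₁.M_pos)
            calc ‖R3 s p.1‖ ≤ ‖R3 s‖ * ‖p.1‖ := (R3 s).le_opNorm _
              _ ≤ M₃ / (1 + s) * ‖p‖ := by
                  apply mul_le_mul (hA₃.norm_le hs) hp1 (norm_nonneg _)
                    (div_nonneg hA₃.M_pos.le (by linarith))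
        _ = M₁ * M₃ / (1 + s) * ‖p‖ := by ring
    have b3 : ‖-(R1 s (R3 s p.1)) + R3 s p.2.2‖ ≤ M' / (1 + s) * ‖p‖ := by
      calc ‖-(R1 s (R3 s p.1)) + R3 s p.2.2‖
          ≤ ‖-(R1 s (R3 s p.1))‖ + ‖R3 s p.2.2‖ := norm_add_le _ _
        _ = ‖R1 s (R3 s p.1)‖ + ‖R3 s p.2.2‖ := by rw [norm_neg]
        _ ≤ M₁ * M₃ / (1 + s) * ‖p‖ + M₃ / (1 + s) * ‖p‖ := add_le_add t1 t2
        _ = (M₁ * M₃ + M₃) / (1 + s) * ‖p‖ := by field_simp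
        _ ≤ M' / (1 + s) * ‖p‖ := by gcongr
    calc ‖invL3 R1 R2 R3 s p‖
        = max ‖R1 s p.1‖ (max ‖R2 s p.2.1‖ ‖-(R1 s (R3 s p.1)) + R3 s p.2.2‖) := by
          rw [hinv]; rw [Prod.norm_def, Prod.norm_def]
      _ ≤ M' / (1 + s) * ‖p‖ := max_le b1 (max_le b2 b3)
  refine ⟨?_, ?_, ?_, ?_, ?_⟩
  · -- (1) two-sided inverse
    intro s hs
    have r1 := hA₁.resolvent s hs
    have r2 := hA₂.resolvent s hs
    have r3 := hA₃.resolvent s hs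
    constructor
    · intro u v w hu hv hw
      rw [hinv]
      have c1 : R1 s ((s:ℂ) • u + A₁ ⟨u, hu⟩) = u := r1.left' _ _
      have c2 : R2 s ((s:ℂ) • v + A₂ ⟨v, hv⟩) = v := r2.left' _ _
      have c3 : R3 s ((s:ℂ) • w + A₃ ⟨w, hw⟩) = w := r3.left' _ _
      refine Prod.ext c1 (Prod.ext c2 ?_)
      show -(R1 s (R3 s ((s:ℂ) • u + A₁ ⟨u, hu⟩)))
          + R3 s (u + ((s:ℂ) • w + A₃ ⟨w, hw⟩)) = w
      rw [hswap s hs, c1, (R3 s).map_add, c3]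
      abel
    · intro p
      have hm13 : R1 s (R3 s p.1) ∈ A₃.domain := by
        rw [hswap s hs]; exact r3.mem _
      have h3 : -(R1 s (R3 s p.1)) + R3 s p.2.2 ∈ A₃.domain :=
        A₃.domain.add_mem (A₃.domain.neg_mem hm13) (r3.mem p.2.2)
      refine ⟨r1.mem p.1, r2.mem p.2.1, h3, r1.eq p.1, r2.eq p.2.1, ?_⟩
      have hsplit : A₃ ⟨-(R1 s (R3 s p.1)) + R3 s p.2.2, h3⟩
          = -A₃ ⟨R1 s (R3 s p.1), hm13⟩ + A₃ ⟨R3 s p.2.2, r3.mem p.2.2⟩ := by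
        rw [show (⟨-(R1 s (R3 s p.1)) + R3 s p.2.2, h3⟩ : A₃.domain)
          = -⟨R1 s (R3 s p.1), hm13⟩ + ⟨R3 s p.2.2, r3.mem p.2.2⟩ from rfl, A₃.map_add, A₃.map_neg]
      have hv1 : A₃ ⟨R1 s (R3 s p.1), hm13⟩
          = A₃ ⟨R3 s (R1 s p.1), r3.mem (R1 s p.1)⟩ :=
        congrArg _ (Subtype.ext (hswap s hs p.1))
      have hv2 : A₃ ⟨R3 s (R1 s p.1), r3.mem (R1 s p.1)⟩
          = R1 s p.1 - (s:ℂ) • R3 s (R1 s p.1) := r3.eq' _ _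
      have hv3 : A₃ ⟨R3 s p.2.2, r3.mem p.2.2⟩
          = p.2.2 - (s:ℂ) • R3 s p.2.2 := r3.eq' _ _
      rw [hsplit, hv1, hv2, hv3, hswap s hs p.1]
      rw [smul_add, smul_neg]
      abel
  · -- dense domain
    have hset : {p : X × X × X | p.1 ∈ A₁.domain ∧ p.2.1 ∈ A₂.domain ∧ p.2.2 ∈ A₃.domain}
        = (A₁.domain : Set X) ×ˢ ((A₂.domain : Set X) ×ˢ (A₃.domain : Set X)) := by
      ext p; simp [Set.mem_prod, and_assoc]
    rw [hset]
    exact hA₁.dense_domain.prod (hA₂.dense_domain.prod hA₃.dense_domain)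
  · -- closed graph
    have hset : {q : (X × X × X) × (X × X × X) |
        ∃ (hu : q.1.1 ∈ A₁.domain) (hv : q.1.2.1 ∈ A₂.domain) (hw : q.1.2.2 ∈ A₃.domain),
          q.2 = (A₁ ⟨q.1.1, hu⟩, A₂ ⟨q.1.2.1, hv⟩, q.1.1 + A₃ ⟨q.1.2.2, hw⟩)}
        = {q : (X × X × X) × (X × X × X) | (q.1.1, q.2.1) ∈ A₁.graph}
          ∩ ({q | (q.1.2.1, q.2.2.1) ∈ A₂.graph}
            ∩ {q | (q.1.2.2, q.2.2.2 - q.1.1) ∈ A₃.graph}) := by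
      ext q
      constructor
      · rintro ⟨hu, hv, hw, heq⟩
        have e1 : q.2.1 = A₁ ⟨q.1.1, hu⟩ := congrArg Prod.fst heq
        have e2 : q.2.2.1 = A₂ ⟨q.1.2.1, hv⟩ := congrArg Prod.fst (congrArg Prod.snd heq)
        have e3 : q.2.2.2 = q.1.1 + A₃ ⟨q.1.2.2, hw⟩ := congrArg Prod.snd (congrArg Prod.snd heq)
        refine ⟨?_, ?_, ?_⟩
        · show (q.1.1, q.2.1) ∈ A₁.graph
          rw [e1]; exact A₁.mem_graph ⟨q.1.1, hu⟩
        · show (q.1.2.1, q.2.2.1) ∈ A₂.graph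
          rw [e2]; exact A₂.mem_graph ⟨q.1.2.1, hv⟩
        · show (q.1.2.2, q.2.2.2 - q.1.1) ∈ A₃.graph
          rw [e3, add_sub_cancel_left]; exact A₃.mem_graph ⟨q.1.2.2, hw⟩
      · rintro ⟨hg1, hg2, hg3⟩
        obtain ⟨y1, hy1, hy1'⟩ := A₁.mem_graph_iff.mp hg1
        obtain ⟨y2, hy2, hy2'⟩ := A₂.mem_graph_iff.mp hg2
        obtain ⟨y3, hy3, hy3'⟩ := A₃.mem_graph_iff.mp hg3
        have hy1 : (y1 : X) = q.1.1 := hy1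
        have hy2 : (y2 : X) = q.1.2.1 := hy2
        have hy3 : (y3 : X) = q.1.2.2 := hy3
        have hy1' : A₁ y1 = q.2.1 := hy1'
        have hy2' : A₂ y2 = q.2.2.1 := hy2'
        have hy3' : A₃ y3 = q.2.2.2 - q.1.1 := hy3'
        have hu : q.1.1 ∈ A₁.domain := hy1 ▸ y1.2
        have hv : q.1.2.1 ∈ A₂.domain := hy2 ▸ y2.2
        have hw : q.1.2.2 ∈ A₃.domain := hy3 ▸ y3.2
        refine ⟨hu, hv, hw, ?_⟩
        have e1 : A₁ ⟨q.1.1, hu⟩ = q.2.1 := by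
          rw [← hy1']; exact congrArg _ (Subtype.ext hy1.symm)
        have e2 : A₂ ⟨q.1.2.1, hv⟩ = q.2.2.1 := by
          rw [← hy2']; exact congrArg _ (Subtype.ext hy2.symm)
        have e3 : A₃ ⟨q.1.2.2, hw⟩ = q.2.2.2 - q.1.1 := by
          rw [← hy3']; exact congrArg _ (Subtype.ext hy3.symm)
        have : q.2 = (q.2.1, q.2.2.1, q.2.2.2) := rfl
        rw [this, e1, e2, e3]
        rw [add_sub_cancel]
    rw [hset]
    refine IsClosed.inter ?_ (IsClosed.inter ?_ ?_)
    · exact hA₁.closed_graph.preimage (by fun_prop)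
    · exact hA₂.closed_graph.preimage (by fun_prop)
    · exact hA₃.closed_graph.preimage (by fun_prop)
  · -- uniform bound
    refine ⟨M', hM'1, fun s hs => ?_⟩
    have h1s : (0:ℝ) < 1 + s := by linarith
    calc (1 + s) * ‖invL3 R1 R2 R3 s‖ ≤ (1 + s) * (M' / (1 + s)) := by
          exact mul_le_mul_of_nonneg_left (hinvb s hs) (le_of_lt h1s)
      _ = M' := by field_simp
  · -- (2) fractional powers
    intro α hα
    have hcont1 := hA₁.continuousOn
    have hcont2 := hA₂.continuousOn
    have hcont3 := hA₃.continuousOn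
    have hinvcont : ContinuousOn (fun s => invL3 R1 R2 R3 s) (Ici (0:ℝ)) := by
      exact contOn_clm_prod (hcont1.clm_comp continuousOn_const)
        (contOn_clm_prod (hcont2.clm_comp continuousOn_const)
          (((hcont1.clm_comp (hcont3.clm_comp continuousOn_const)).neg).add
            (hcont3.clm_comp continuousOn_const)))
    have hIop : IntegrableOn (fun s : ℝ => s ^ (-α) • invL3 R1 R2 R3 s) (Ioi 0) :=
      integrable_aux hinvcont hM'0 hinvb hα
    have hIopR : ∀ {M : ℝ} {A : X →ₗ.[ℂ] X} {R : ℝ → X →L[ℂ] X}, IsPositive A M R →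
        IntegrableOn (fun s : ℝ => s ^ (-α) • R s) (Ioi 0) := fun hA =>
      integrable_aux hA.continuousOn hA.M_pos.le (fun s hs => hA.norm_le hs) hα
    have hIvec : ∀ {M : ℝ} {A : X →ₗ.[ℂ] X} {R : ℝ → X →L[ℂ] X}, IsPositive A M R →
        ∀ x : X, IntegrableOn (fun s : ℝ => s ^ (-α) • R s x) (Ioi 0) := by
      intro M A R hA x
      apply integrable_aux (hA.continuousOn.clm_apply continuousOn_const)
        (mul_nonneg hA.M_pos.le (norm_nonneg x)) _ hα
      intro s hs
      calc ‖R s x‖ ≤ ‖R s‖ * ‖x‖ := (R s).le_opNorm x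
        _ ≤ M / (1 + s) * ‖x‖ := mul_le_mul_of_nonneg_right (hA.norm_le hs) (norm_nonneg _)
        _ = M * ‖x‖ / (1 + s) := by ring
    have hnp : ∀ (R : ℝ → X →L[ℂ] X),
        IntegrableOn (fun s : ℝ => s ^ (-α) • R s) (Ioi 0) → ∀ x : X,
        negPow R α x = (Real.sin (π * α) / π) • ∫ s in Ioi (0:ℝ), s ^ (-α) • R s x := by
      intro R hI x
      show ((Real.sin (π * α) / π) • ∫ s in Ioi (0:ℝ), s ^ (-α) • R s) x = _
      rw [ContinuousLinearMap.smul_apply, ContinuousLinearMap.integral_apply hI x]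
      simp only [ContinuousLinearMap.smul_apply]
    refine ⟨hIop, fun p => ?_⟩
    have hint1 := hIvec hA₁ p.1
    have hint2 := hIvec hA₂ p.2.1
    have hint3 := hIvec hA₃ p.1
    have hint4 := hIvec hA₃ p.2.2
    have hintm : IntegrableOn (fun s : ℝ =>
        C (s ^ (-α) • R1 s p.1) - C (s ^ (-α) • R3 s p.1) + s ^ (-α) • R3 s p.2.2)
        (Ioi 0) :=
      ((C.integrable_comp hint1).sub (C.integrable_comp hint3)).add hint4
    have e_apply : ((Real.sin (π * α) / π) • ∫ s in Ioi (0:ℝ), s ^ (-α) • invL3 R1 R2 R3 s) p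
        = (Real.sin (π * α) / π) • ∫ s in Ioi (0:ℝ), s ^ (-α) • (invL3 R1 R2 R3 s p) := by
      rw [ContinuousLinearMap.smul_apply, ContinuousLinearMap.integral_apply hIop p]
      simp only [ContinuousLinearMap.smul_apply]
    have hpt : EqOn (fun s : ℝ => s ^ (-α) • (invL3 R1 R2 R3 s p))
        (fun s : ℝ => (s ^ (-α) • R1 s p.1, (s ^ (-α) • R2 s p.2.1,
          C (s ^ (-α) • R1 s p.1) - C (s ^ (-α) • R3 s p.1) + s ^ (-α) • R3 s p.2.2)))
        (Ioi 0) := by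
      intro s hs
      have hs0 : (0:ℝ) ≤ s := le_of_lt hs
      show s ^ (-α) • (invL3 R1 R2 R3 s p) = _
      rw [hinv]
      refine Prod.ext rfl (Prod.ext rfl ?_)
      show s ^ (-α) • (-(R1 s (R3 s p.1)) + R3 s p.2.2) = _
      rw [hR13 s hs0 p.1]
      simp only [neg_sub, smul_add, smul_sub, C.map_smul_of_tower]
    have e3rd : (∫ s in Ioi (0:ℝ),
        (C (s ^ (-α) • R1 s p.1) - C (s ^ (-α) • R3 s p.1) + s ^ (-α) • R3 s p.2.2))
        = C (∫ s in Ioi (0:ℝ), s ^ (-α) • R1 s p.1)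
          - C (∫ s in Ioi (0:ℝ), s ^ (-α) • R3 s p.1)
          + ∫ s in Ioi (0:ℝ), s ^ (-α) • R3 s p.2.2 := by
      rw [integral_add (f := fun s : ℝ => C (s ^ (-α) • R1 s p.1) - C (s ^ (-α) • R3 s p.1))
        (g := fun s : ℝ => s ^ (-α) • R3 s p.2.2)
        ((C.integrable_comp hint1).sub (C.integrable_comp hint3)) hint4]
      rw [integral_sub (C.integrable_comp hint1) (C.integrable_comp hint3),
        C.integral_comp_comm hint1, C.integral_comp_comm hint3]
    rw [e_apply, setIntegral_congr_fun measurableSet_Ioi hpt,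
      integral_pair hint1 (hint2.prodMk hintm), integral_pair hint2 hintm, e3rd,
      hnp R1 (hIopR hA₁) p.1, hnp R2 (hIopR hA₂) p.2.1, hnp R3 (hIopR hA₃) p.1,
      hnp R3 (hIopR hA₃) p.2.2]
    simp only [Prod.smul_mk, smul_add, smul_sub, map_sub, C.map_smul_of_tower]
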